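/- arXiv:1007.3910 — 3 statements merged into one kernel-verified Lean document; each statement's English description precedes it below -/
import Mathlib

section
/- Let μ be a probability measure on ℝ with μ([0,∞)) = 1 and mean a = ∫ x dμ(x) satisfying 0 < a < ∞, let μ* denote its size-biased measure, and suppose there exists a probability measure ν on ℝ with ν([0,∞)) = 1 such that μ* = μ ∗ ν. Then the characteristic function φ of μ admits the Lévy representation φ(u) = exp( a · ∫_{[0,∞)} k(u,y) dν(y) ) for all real u, where k(u,y) = (e^{iuy} − 1)/y for y > 0 and k(u,0) = iu. In particular the Lévy measure in this representation is a times the distribution ν of the increment. -/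
open MeasureTheory
open scoped NNReal ENNReal

/-- The size-biased measure of `μ`: `dμ*(x) = (x / ∫ y dμ(y)) dμ(x)`. -/
noncomputable def sizeBiased (μ : Measure ℝ) : Measure ℝ :=
  μ.withDensity (fun x => ENNReal.ofReal (x / ∫ y, y ∂μ))

/-- Convolution of two measures on ℝ: pushforward of the product under addition. -/
noncomputable def mconv (μ ν : Measure ℝ) : Measure ℝ :=
  Measure.map (fun p : ℝ × ℝ => p.1 + p.2) (μ.prod ν)

/-- The characteristic function `φ(u) = ∫ e^{iux} dμ(x)`. -/
noncomputable def charFn (μ : Measure ℝ) (u : ℝ) : ℂ :=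
  ∫ x, Complex.exp (Complex.I * u * x) ∂μ

/-- The Lévy kernel `k(u,y) = (e^{iuy} - 1)/y` for `y ≠ 0`, with `k(u,0) = iu`. -/
noncomputable def levyKernel (u y : ℝ) : ℂ :=
  if y = 0 then Complex.I * u else (Complex.exp (Complex.I * u * y) - 1) / y

lemma norm_exp_I_mul (u x : ℝ) : ‖Complex.exp (Complex.I * u * x)‖ = 1 := by
  rw [Complex.norm_exp]
  simp [Complex.mul_re]

lemma hasDerivAt_exp_I_mul (x : ℝ) (u : ℝ) :
    HasDerivAt (fun u : ℝ => Complex.exp (Complex.I * u * x))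
      (Complex.I * x * Complex.exp (Complex.I * u * x)) u := by
  have h1 : HasDerivAt (fun u : ℝ => Complex.I * (u : ℂ) * (x : ℂ)) (Complex.I * x) u := by
    simpa using ((Complex.ofRealCLM.hasDerivAt (x := u)).const_mul Complex.I).mul_const (x : ℂ)
  simpa [mul_comm] using h1.cexp

lemma norm_exp_I_mul_sub_one_le (u y : ℝ) :
    ‖Complex.exp (Complex.I * u * y) - 1‖ ≤ |u| * |y| := by
  have key : ∀ t : ℝ, t ∈ Set.univ → HasDerivWithinAt (fun t : ℝ => Complex.exp (Complex.I * u * t))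
      (Complex.exp (Complex.I * u * (t:ℂ)) * (Complex.I * u)) Set.univ t := by
    intro t _
    have h1 : HasDerivAt (fun t : ℝ => Complex.I * (u : ℂ) * (t : ℂ)) (Complex.I * u) t := by
      simpa using (Complex.ofRealCLM.hasDerivAt (x := t)).const_mul (Complex.I * (u:ℂ))
    exact h1.cexp.hasDerivWithinAt
  have hb : ∀ t : ℝ, t ∈ Set.univ →
      ‖Complex.exp (Complex.I * u * (t:ℂ)) * (Complex.I * u)‖ ≤ |u| := by
    intro t _
    rw [norm_mul, norm_exp_I_mul, one_mul, norm_mul]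
    simp
  have := convex_univ.norm_image_sub_le_of_norm_hasDerivWithin_le key hb
    (Set.mem_univ (0:ℝ)) (Set.mem_univ y)
  simpa [Real.norm_eq_abs] using this

lemma norm_levyKernel_le (u y : ℝ) : ‖levyKernel u y‖ ≤ |u| := by
  unfold levyKernel
  split
  · simp
  · rename_i h
    rw [norm_div]
    rw [div_le_iff₀ (by simpa [Real.norm_eq_abs] using abs_pos.mpr h)]
    simpa [Complex.norm_real, Real.norm_eq_abs, mul_comm] using norm_exp_I_mul_sub_one_le u y

lemma measurable_levyKernel (u : ℝ) : Measurable (levyKernel u) := by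
  unfold levyKernel
  exact Measurable.ite (measurableSet_eq)
    measurable_const
    (((Complex.measurable_ofReal.comp measurable_id).const_mul (Complex.I * u)).cexp.sub
      measurable_const |>.div (Complex.measurable_ofReal))

lemma hasDerivAt_levyKernel (y u : ℝ) :
    HasDerivAt (fun u : ℝ => levyKernel u y) (Complex.I * Complex.exp (Complex.I * u * y)) u := by
  rcases eq_or_ne y 0 with h | h
  · subst h
    simp only [levyKernel, if_pos rfl]
    simpa using (Complex.ofRealCLM.hasDerivAt (x := u)).const_mul Complex.I
  · simp only [levyKernel, if_neg h]
    have hy : (y:ℂ) ≠ 0 := Complex.ofReal_ne_zero.mpr h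
    have h2 := ((hasDerivAt_exp_I_mul y u).sub_const 1).div_const (y : ℂ)
    refine h2.congr_deriv ?_
    field_simp

lemma integrable_exp_I_mul (μ : Measure ℝ) [IsProbabilityMeasure μ] (u : ℝ) :
    Integrable (fun x : ℝ => Complex.exp (Complex.I * u * x)) μ := by
  refine Integrable.mono' (integrable_const 1) ?_ (ae_of_all _ fun x => ?_)
  · exact (Continuous.aestronglyMeasurable (by fun_prop))
  · rw [norm_exp_I_mul]

/-- If the size-biased measure of `μ` is `μ ∗ ν` with `ν` a nonnegative probability
measure, then the characteristic function of `μ` has the Lévy representation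
`φ(u) = exp(a ∫_{[0,∞)} k(u,y) dν(y))`, i.e. with Lévy measure `a·ν`. -/
theorem levy_representation_of_sizeBias_indep_increment
    (μ : Measure ℝ) [IsProbabilityMeasure μ]
    (hsupp : μ (Set.Ici 0) = 1)
    (hint : Integrable id μ)
    (ha : 0 < ∫ x, x ∂μ)
    (ν : Measure ℝ) [IsProbabilityMeasure ν] (hν : ν (Set.Ici 0) = 1)
    (hconv : sizeBiased μ = mconv μ ν) :
    ∀ u : ℝ, charFn μ u =
      Complex.exp (((∫ x, x ∂μ : ℝ) : ℂ) * ∫ y in Set.Ici (0 : ℝ), levyKernel u y ∂ν) := by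
  set a : ℝ := ∫ x, x ∂μ with ha_def
  have haC : ((a:ℂ)) ≠ 0 := Complex.ofReal_ne_zero.mpr ha.ne'
  -- a.e. nonnegativity
  have hμc : μ (Set.Ici (0:ℝ))ᶜ = 0 := by
    rw [measure_compl measurableSet_Ici (measure_ne_top _ _), hsupp, measure_univ, tsub_self]
  have hνc : ν (Set.Ici (0:ℝ))ᶜ = 0 := by
    rw [measure_compl measurableSet_Ici (measure_ne_top _ _), hν, measure_univ, tsub_self]
  have hμ0 : ∀ᵐ x ∂μ, (0:ℝ) ≤ x := by
    filter_upwards [(MeasureTheory.mem_ae_iff).mpr hμc] with x hx using hx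
  have hν0 : ∀ᵐ y ∂ν, y ∈ Set.Ici (0:ℝ) := (MeasureTheory.mem_ae_iff).mpr hνc
  -- key identity: ∫ x e^{iux} dμ = a φ(u) ψ(u)
  have hkey : ∀ u : ℝ, ∫ x, (x:ℂ) * Complex.exp (Complex.I * u * x) ∂μ
      = (a:ℂ) * (charFn μ u * charFn ν u) := by
    intro u
    have hL : ∫ x, Complex.exp (Complex.I * u * x) ∂(sizeBiased μ)
        = (a:ℂ)⁻¹ * ∫ x, (x:ℂ) * Complex.exp (Complex.I * u * x) ∂μ := by
      rw [sizeBiased,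
        show (fun x : ℝ => ENNReal.ofReal (x / ∫ y, y ∂μ))
          = fun x => ((Real.toNNReal (x / a) : ℝ≥0) : ℝ≥0∞) from rfl,
        integral_withDensity_eq_integral_smul
          ((measurable_id'.div_const a).real_toNNReal :
            Measurable fun x : ℝ => Real.toNNReal (x / a)) _,
        ← integral_const_mul]
      apply integral_congr_ae
      filter_upwards [hμ0] with x hx
      rw [NNReal.smul_def, Real.coe_toNNReal _ (div_nonneg hx ha.le), Complex.real_smul]
      push_cast
      field_simp
    have hR : ∫ x, Complex.exp (Complex.I * u * x) ∂(mconv μ ν)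
        = charFn μ u * charFn ν u := by
      rw [mconv, integral_map (by fun_prop) (Continuous.aestronglyMeasurable (by fun_prop))]
      have : ∀ p : ℝ × ℝ, Complex.exp (Complex.I * u * ((p.1 + p.2 : ℝ) : ℂ))
          = Complex.exp (Complex.I * u * p.1) * Complex.exp (Complex.I * u * p.2) := by
        intro p
        rw [← Complex.exp_add]
        push_cast
        ring_nf
      simp_rw [this]
      exact integral_prod_mul (fun x : ℝ => Complex.exp (Complex.I * u * x))
        (fun y : ℝ => Complex.exp (Complex.I * u * y))
    rw [hconv, hR] at hL
    rw [hL, ← mul_assoc, mul_inv_cancel₀ haC, one_mul]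
  -- derivative of φ
  have hφ : ∀ u : ℝ, HasDerivAt (charFn μ)
      (Complex.I * ((a:ℂ) * (charFn μ u * charFn ν u))) u := by
    intro u
    have H := hasDerivAt_integral_of_dominated_loc_of_deriv_le
      (F := fun (u : ℝ) (x : ℝ) => Complex.exp (Complex.I * u * x))
      (F' := fun (u : ℝ) (x : ℝ) => Complex.I * x * Complex.exp (Complex.I * u * x))
      (bound := fun x => ‖x‖) (μ := μ) (x₀ := u) Filter.univ_mem
      (Filter.Eventually.of_forall fun u' =>
        (Continuous.aestronglyMeasurable (by fun_prop)))
      (integrable_exp_I_mul μ u)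
      (Continuous.aestronglyMeasurable (by fun_prop))
      (ae_of_all _ fun x u' _ => by
        rw [norm_mul, norm_mul, norm_exp_I_mul, Complex.norm_I, one_mul, mul_one,
          Complex.norm_real])
      hint.norm
      (ae_of_all _ fun x u' _ => hasDerivAt_exp_I_mul x u')
    have heq : ∫ x, Complex.I * x * Complex.exp (Complex.I * u * x) ∂μ
        = Complex.I * ((a:ℂ) * (charFn μ u * charFn ν u)) := by
      rw [← hkey u, ← integral_const_mul]
      exact integral_congr_ae (ae_of_all _ fun x => by ring)
    have h2 : HasDerivAt (fun u : ℝ => ∫ x, Complex.exp (Complex.I * u * x) ∂μ)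
        (∫ x, Complex.I * x * Complex.exp (Complex.I * u * x) ∂μ) u := H.2
    rw [heq] at h2
    exact h2
  -- the function G and its derivative
  set G : ℝ → ℂ := fun u => ∫ y, levyKernel u y ∂ν with hG_def
  have hG : ∀ u : ℝ, HasDerivAt G (Complex.I * charFn ν u) u := by
    intro u
    have H := hasDerivAt_integral_of_dominated_loc_of_deriv_le
      (F := fun (u : ℝ) (y : ℝ) => levyKernel u y)
      (F' := fun (u : ℝ) (y : ℝ) => Complex.I * Complex.exp (Complex.I * u * y))
      (bound := fun _ => 1) (μ := ν) (x₀ := u) Filter.univ_mem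
      (Filter.Eventually.of_forall fun u' =>
        (measurable_levyKernel u').aestronglyMeasurable)
      (by
        refine Integrable.mono' (integrable_const |u|) ?_ (ae_of_all _ fun y => ?_)
        · exact (measurable_levyKernel u).aestronglyMeasurable
        · exact norm_levyKernel_le u y)
      (Continuous.aestronglyMeasurable (by fun_prop))
      (ae_of_all _ fun y u' _ => by
        rw [norm_mul, norm_exp_I_mul, Complex.norm_I, one_mul])
      (integrable_const 1)
      (ae_of_all _ fun y u' _ => hasDerivAt_levyKernel y u')
    have h2 : HasDerivAt (fun u : ℝ => ∫ y, levyKernel u y ∂ν)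
        (∫ y, Complex.I * Complex.exp (Complex.I * u * y) ∂ν) u := H.2
    rw [integral_const_mul] at h2
    exact h2
  -- the auxiliary function h u = φ u * exp(-(a * G u)) is constant
  set h : ℝ → ℂ := fun u => charFn μ u * Complex.exp (-((a:ℂ) * G u)) with hh_def
  have hderiv : ∀ u : ℝ, HasDerivAt h 0 u := by
    intro u
    have hinner : HasDerivAt (fun u => -((a:ℂ) * G u))
        (-((a:ℂ) * (Complex.I * charFn ν u))) u := ((hG u).const_mul (a:ℂ)).neg
    have hexp := hinner.cexp
    have := (hφ u).mul hexp
    refine this.congr_deriv ?_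
    ring
  have hconst : ∀ u : ℝ, h u = h 0 :=
    fun u => is_const_of_deriv_eq_zero (fun v => (hderiv v).differentiableAt)
      (fun v => (hderiv v).deriv) u 0
  have hφ0 : charFn μ 0 = 1 := by
    simp [charFn]
  have hG0 : G 0 = 0 := by
    have : ∀ y : ℝ, levyKernel (0:ℝ) y = 0 := by
      intro y
      unfold levyKernel
      split <;> simp
    simp [hG_def, this]
  have hh0 : h 0 = 1 := by
    simp [hh_def, hφ0, hG0]
  -- conclude
  intro u
  have hc := hconst u
  rw [hh0, hh_def] at hc
  have hmain : charFn μ u = Complex.exp ((a:ℂ) * G u) := by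
    have := congrArg (fun z => z * Complex.exp ((a:ℂ) * G u)) hc
    simp only [mul_assoc, ← Complex.exp_add, one_mul] at this
    simpa using this
  have hres : ν.restrict (Set.Ici (0:ℝ)) = ν :=
    Measure.restrict_eq_self_of_ae_mem hν0
  rw [hmain]
  congr 1
  rw [hres]
end

section
/- Let I be an arbitrary index set and for each α ∈ I let μ_α be a probability measure on ℝ with μ_α([0,∞)) = 1 and mean a_α = ∫ x dμ_α(x) satisfying c ≤ a_α < ∞ for a fixed constant c > 0. Then the family {μ_α} is uniformly integrable (i.e., for every δ > 0 there exists L < ∞ such that ∫_{(L,∞)} x dμ_α(x) < δ for all α ∈ I) if and only if the family of size-biased measures {μ_α*} is tight (i.e., for every ε > 0 there exists L < ∞ such that μ_α*((L,∞)) < ε for all α ∈ I). -/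
open MeasureTheory

lemma sizeBiased_apply_Ioi (μ : Measure ℝ) (hint : Integrable id μ)
    (ha : 0 < ∫ y, y ∂μ) {L : ℝ} (hL : 0 ≤ L) :
    sizeBiased μ (Set.Ioi L)
      = ENNReal.ofReal ((∫ x in Set.Ioi L, x ∂μ) / ∫ y, y ∂μ) := by
  rw [sizeBiased, withDensity_apply _ measurableSet_Ioi,
    ← ofReal_integral_eq_lintegral_ofReal (f := fun x => x / ∫ y, y ∂μ)
      ((hint.restrict (s := Set.Ioi L)).div_const _)
      (by filter_upwards [ae_restrict_mem measurableSet_Ioi] with x hx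
          exact div_nonneg (hL.trans hx.le) ha.le),
    integral_div]

/-- For a family of nonnegative probability measures with means bounded below by `c > 0`,
the family is uniformly integrable iff the family of size-biased measures is tight. -/
theorem uniformIntegrable_iff_sizeBiased_tight
    {I : Type*} (μ : I → Measure ℝ) (c : ℝ) (hc : 0 < c)
    (hprob : ∀ α, IsProbabilityMeasure (μ α))
    (hsupp : ∀ α, μ α (Set.Ici 0) = 1)
    (hint : ∀ α, Integrable id (μ α))
    (hmean : ∀ α, c ≤ ∫ x, x ∂(μ α)) :
    (∀ δ : ℝ, 0 < δ → ∃ L : ℝ, ∀ α, ∫ x in Set.Ioi L, x ∂(μ α) < δ) ↔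
    (∀ ε : ℝ, 0 < ε → ∃ L : ℝ, ∀ α, sizeBiased (μ α) (Set.Ioi L) < ENNReal.ofReal ε) := by
  have hapos : ∀ α, 0 < ∫ y, y ∂(μ α) := fun α => hc.trans_le (hmean α)
  constructor
  · intro h ε hε
    obtain ⟨L, hL⟩ := h (c * ε) (by positivity)
    refine ⟨max L 0, fun α => ?_⟩
    haveI := hprob α
    have ha := hapos α
    rw [sizeBiased_apply_Ioi (μ α) (hint α) ha (le_max_right L 0),
      ENNReal.ofReal_lt_ofReal_iff hε]
    have hae : ∀ᵐ x ∂(μ α), (0 : ℝ) ≤ x := by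
      have h0 : μ α (Set.Iio 0) = 0 := by
        have hcompl : Set.Iio (0 : ℝ) = (Set.Ici 0)ᶜ := (Set.compl_Ici (a := (0:ℝ))).symm
        rw [hcompl, measure_compl measurableSet_Ici (measure_ne_top _ _), hsupp α,
          measure_univ]
        simp
      rw [ae_iff]
      simp only [not_le]
      exact h0
    have hmono : (∫ x in Set.Ioi (max L 0), x ∂(μ α)) ≤ ∫ x in Set.Ioi L, x ∂(μ α) :=
      setIntegral_mono_set (hint α).restrict (ae_restrict_of_ae hae)
        (HasSubset.Subset.eventuallyLE (Set.Ioi_subset_Ioi (le_max_left L 0)))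
    have hI : 0 ≤ ∫ x in Set.Ioi (max L 0), x ∂(μ α) :=
      setIntegral_nonneg measurableSet_Ioi fun x hx => (le_max_right L 0).trans hx.le
    have hIlt : (∫ x in Set.Ioi (max L 0), x ∂(μ α)) < c * ε := hmono.trans_lt (hL α)
    calc (∫ x in Set.Ioi (max L 0), x ∂(μ α)) / (∫ y, y ∂(μ α))
        ≤ (∫ x in Set.Ioi (max L 0), x ∂(μ α)) / c :=
          div_le_div_of_nonneg_left hI hc (hmean α)
      _ < ε := (div_lt_iff₀ hc).mpr (by linarith)
  · intro h δ hδ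
    obtain ⟨L₀, h₀⟩ := h (1 / 2) (by norm_num)
    set M := max L₀ 0 with hMdef
    have hM0 : 0 ≤ M := le_max_right _ _
    have habd : ∀ α, (∫ y, y ∂(μ α)) ≤ 2 * M := by
      intro α
      haveI := hprob α
      have ha := hapos α
      have hle : sizeBiased (μ α) (Set.Ioi M) < ENNReal.ofReal (1 / 2) :=
        lt_of_le_of_lt (measure_mono (Set.Ioi_subset_Ioi (le_max_left _ _))) (h₀ α)
      rw [sizeBiased_apply_Ioi (μ α) (hint α) ha hM0,
        ENNReal.ofReal_lt_ofReal_iff (by norm_num)] at hle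
      have hIM : (∫ x in Set.Ioi M, x ∂(μ α)) < (∫ y, y ∂(μ α)) / 2 := by
        rw [div_lt_iff₀ ha] at hle
        linarith
      have hsplit : (∫ x in Set.Iic M, x ∂(μ α)) + (∫ x in Set.Ioi M, x ∂(μ α))
          = ∫ y, y ∂(μ α) := by
        have := integral_add_compl (f := id) (measurableSet_Iic (a := M)) (hint α)
        simpa [Set.compl_Iic] using this
      have h1 : (∫ x in Set.Iic M, x ∂(μ α)) ≤ ∫ _ in Set.Iic M, M ∂(μ α) :=
        setIntegral_mono_on (hint α).restrict
          ((integrableOn_const_iff).mpr (Or.inr (measure_lt_top _ _)))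
          measurableSet_Iic (fun x hx => hx)
      rw [setIntegral_const, smul_eq_mul] at h1
      have htr : ((μ α) (Set.Iic M)).toReal ≤ 1 := by
        simpa using ENNReal.toReal_mono ENNReal.one_ne_top prob_le_one
      have hIic : (∫ x in Set.Iic M, x ∂(μ α)) ≤ M := by
        have htr' : (μ α).real (Set.Iic M) ≤ 1 := htr
        nlinarith
      linarith
    have hεpos : 0 < δ / (2 * M + 1) := by positivity
    obtain ⟨L₁, h₁⟩ := h (δ / (2 * M + 1)) hεpos
    refine ⟨max L₁ 0, fun α => ?_⟩
    haveI := hprob α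
    have ha := hapos α
    have hlt : sizeBiased (μ α) (Set.Ioi (max L₁ 0)) < ENNReal.ofReal (δ / (2 * M + 1)) :=
      lt_of_le_of_lt (measure_mono (Set.Ioi_subset_Ioi (le_max_left _ _))) (h₁ α)
    rw [sizeBiased_apply_Ioi (μ α) (hint α) ha (le_max_right L₁ 0),
      ENNReal.ofReal_lt_ofReal_iff hεpos] at hlt
    have hI : (∫ x in Set.Ioi (max L₁ 0), x ∂(μ α)) < (δ / (2 * M + 1)) * (∫ y, y ∂(μ α)) :=
      (div_lt_iff₀ ha).mp hlt
    have habd' := habd α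
    have hkey : (δ / (2 * M + 1)) * (2 * M + 1) = δ := by
      field_simp
    nlinarith [mul_le_mul_of_nonneg_left habd' hεpos.le]
end

section
/- Let I be an arbitrary index set and for each α ∈ I let μ_α be a probability measure on ℝ with μ_α([0,∞)) = 1 and finite mean ∫ x dμ_α(x) < ∞. Fix any constant c ∈ (0,∞), and for each α let ν_α be the size-biased measure of the pushforward of μ_α under the map x ↦ x + c. Then the family {μ_α} is uniformly integrable (i.e., for every δ > 0 there exists L < ∞ such that ∫_{(L,∞)} x dμ_α(x) < δ for all α ∈ I) if and only if the family {ν_α} is tight (i.e., for every ε > 0 there exists L < ∞ such that ν_α((L,∞)) < ε for all α ∈ I). -/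
open MeasureTheory

section Aux

variable {μ : Measure ℝ} [IsProbabilityMeasure μ] {c : ℝ}

lemma aux_ae (hsupp : μ (Set.Ici 0) = 1) : ∀ᵐ x ∂μ, 0 ≤ x := by
  have h : μ (Set.Ici 0)ᶜ = 0 := by
    rw [measure_compl measurableSet_Ici (measure_ne_top μ _), hsupp, measure_univ, tsub_self]
  filter_upwards [measure_eq_zero_iff_ae_notMem.mp h] with x hx
  simpa [Set.mem_compl_iff] using hx

lemma aux_mean_nonneg (hsupp : μ (Set.Ici 0) = 1) : 0 ≤ ∫ y, y ∂μ :=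
  integral_nonneg_of_ae (aux_ae hsupp)

lemma aux_total (hint : Integrable id μ) : ∫ x, (x + c) ∂μ = (∫ y, y ∂μ) + c := by
  have hint' : Integrable (fun x : ℝ => x) μ := hint
  rw [integral_add hint' (integrable_const c), integral_const, probReal_univ]
  simp

lemma aux_map_mean (hint : Integrable id μ) :
    ∫ y, y ∂(Measure.map (fun x => x + c) μ) = (∫ y, y ∂μ) + c := by
  rw [integral_map (f := fun y => y) (measurable_add_const c).aemeasurable
    aestronglyMeasurable_id]
  exact aux_total hint

lemma aux_key (hsupp : μ (Set.Ici 0) = 1) (hint : Integrable id μ) (hc : 0 < c) (L : ℝ) :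
    sizeBiased (Measure.map (fun x => x + c) μ) (Set.Ioi L)
      = ENNReal.ofReal ((∫ x in Set.Ioi (L - c), (x + c) ∂μ) / ((∫ y, y ∂μ) + c)) := by
  set m := ∫ y, y ∂μ with hm
  have hmc : 0 < m + c := by linarith [aux_mean_nonneg hsupp]
  rw [sizeBiased, withDensity_apply _ measurableSet_Ioi, aux_map_mean hint,
    setLIntegral_map (f := fun y => ENNReal.ofReal (y / (m + c))) measurableSet_Ioi
      ((measurable_id.div_const _).ennreal_ofReal) (measurable_add_const c),
    Set.preimage_add_const_Ioi]
  rw [← ofReal_integral_eq_lintegral_ofReal]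
  · rw [integral_div]
  · exact ((hint.add (integrable_const c)).div_const _).restrict
  · filter_upwards [ae_restrict_of_ae (aux_ae hsupp)] with x hx
    positivity

end Aux

/-- For a family of nonnegative probability measures with finite means, and any fixed
`c > 0`, the family is uniformly integrable iff the family of size-biased measures of
the `c`-shifted measures is tight. -/
theorem uniformIntegrable_iff_shifted_sizeBiased_tight
    {I : Type*} (μ : I → Measure ℝ) (c : ℝ) (hc : 0 < c)
    (hprob : ∀ α, IsProbabilityMeasure (μ α))
    (hsupp : ∀ α, μ α (Set.Ici 0) = 1)
    (hint : ∀ α, Integrable id (μ α)) :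
    (∀ δ : ℝ, 0 < δ → ∃ L : ℝ, ∀ α, ∫ x in Set.Ioi L, x ∂(μ α) < δ) ↔
    (∀ ε : ℝ, 0 < ε → ∃ L : ℝ, ∀ α,
        sizeBiased (Measure.map (fun x => x + c) (μ α)) (Set.Ioi L) < ENNReal.ofReal ε) := by
  constructor
  · intro h ε hε
    obtain ⟨K₀, hK₀⟩ := h (ε * c / (1 + c)) (by positivity)
    refine ⟨max K₀ 1 + c, fun α => ?_⟩
    haveI := hprob α
    have hi : Integrable (fun x : ℝ => x) (μ α) := hint α
    have hm : 0 ≤ ∫ y, y ∂(μ α) := aux_mean_nonneg (hsupp α)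
    have hmc : (0:ℝ) < (∫ y, y ∂(μ α)) + c := by linarith
    rw [aux_key (hsupp α) (hint α) hc, ENNReal.ofReal_lt_ofReal_iff hε]
    have hKc : max K₀ 1 + c - c = max K₀ 1 := by ring
    rw [hKc]
    set K := max K₀ 1 with hK
    have hT1 : ∫ x in Set.Ioi K, x ∂(μ α) ≤ ∫ x in Set.Ioi K₀, x ∂(μ α) :=
      setIntegral_mono_set hi.integrableOn (ae_restrict_of_ae (aux_ae (hsupp α)))
        (HasSubset.Subset.eventuallyLE (Set.Ioi_subset_Ioi (le_max_left _ _)))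
    have hT : ∫ x in Set.Ioi K, x ∂(μ α) < ε * c / (1 + c) := lt_of_le_of_lt hT1 (hK₀ α)
    have hμT : ((μ α) (Set.Ioi K)).toReal ≤ ∫ x in Set.Ioi K, x ∂(μ α) := by
      have h1 : ∫ _x in Set.Ioi K, (1:ℝ) ∂(μ α) = ((μ α) (Set.Ioi K)).toReal := by
        rw [setIntegral_const]; simp; rfl
      rw [← h1]
      refine setIntegral_mono_on ((integrableOn_const_iff).mpr (Or.inr (measure_lt_top _ _)))
        hi.integrableOn measurableSet_Ioi (fun x hx => ?_)
      have h2 : (1:ℝ) ≤ K := le_max_right _ _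
      exact h2.trans (le_of_lt hx)
    have hsplit : ∫ x in Set.Ioi K, (x + c) ∂(μ α)
        = (∫ x in Set.Ioi K, x ∂(μ α)) + c * ((μ α) (Set.Ioi K)).toReal := by
      rw [integral_add hi.integrableOn (integrable_const c), setIntegral_const,
        smul_eq_mul, mul_comm]; rfl
    have hA : ∫ x in Set.Ioi K, (x + c) ∂(μ α) < ε * c := by
      rw [hsplit]
      have h2 : c * ((μ α) (Set.Ioi K)).toReal ≤ c * ∫ x in Set.Ioi K, x ∂(μ α) :=
        mul_le_mul_of_nonneg_left hμT hc.le
      have h3 : (1 + c) * (∫ x in Set.Ioi K, x ∂(μ α)) < (1 + c) * (ε * c / (1 + c)) :=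
        mul_lt_mul_of_pos_left hT (by linarith)
      have h4 : (1 + c) * (ε * c / (1 + c)) = ε * c := by field_simp
      nlinarith
    rw [div_lt_iff₀ hmc]
    have h5 : ε * c ≤ ε * ((∫ y, y ∂(μ α)) + c) := mul_le_mul_of_nonneg_left (by linarith) hε.le
    linarith
  · intro h δ hδ
    obtain ⟨L₀, hL₀⟩ := h (1/2) (by norm_num)
    set B := max L₀ 1 with hB
    have hB1 : (1:ℝ) ≤ B := le_max_right _ _
    have hbound : ∀ α, (∫ y, y ∂(μ α)) + c ≤ 2 * B := by
      intro α
      haveI := hprob α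
      have hi : Integrable (fun x : ℝ => x) (μ α) := hint α
      have hic : Integrable (fun x : ℝ => x + c) (μ α) := hi.add (integrable_const c)
      have hm : 0 ≤ ∫ y, y ∂(μ α) := aux_mean_nonneg (hsupp α)
      have hmc : (0:ℝ) < (∫ y, y ∂(μ α)) + c := by linarith
      have h2 : sizeBiased (Measure.map (fun x => x + c) (μ α)) (Set.Ioi B)
          < ENNReal.ofReal (1/2) :=
        lt_of_le_of_lt (measure_mono (Set.Ioi_subset_Ioi (le_max_left _ _))) (hL₀ α)
      rw [aux_key (hsupp α) (hint α) hc] at h2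
      have h3 : (∫ x in Set.Ioi (B - c), (x + c) ∂(μ α)) / ((∫ y, y ∂(μ α)) + c) < 1/2 :=
        (ENNReal.ofReal_lt_ofReal_iff (by norm_num)).mp h2
      rw [div_lt_iff₀ hmc] at h3
      have htot : (∫ x in Set.Ioi (B - c), (x + c) ∂(μ α))
          + ∫ x in (Set.Ioi (B - c))ᶜ, (x + c) ∂(μ α) = (∫ y, y ∂(μ α)) + c := by
        rw [integral_add_compl measurableSet_Ioi hic]
        exact aux_total (hint α)
      have hcompl : ∫ x in (Set.Ioi (B - c))ᶜ, (x + c) ∂(μ α) ≤ B := by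
        have h4 : ∫ x in (Set.Ioi (B - c))ᶜ, (x + c) ∂(μ α)
            ≤ ∫ _x in (Set.Ioi (B - c))ᶜ, B ∂(μ α) := by
          refine setIntegral_mono_on hic.integrableOn
            ((integrableOn_const_iff).mpr (Or.inr (measure_lt_top _ _)))
            measurableSet_Ioi.compl (fun x hx => ?_)
          have : x ≤ B - c := by simpa using hx
          linarith
        rw [setIntegral_const, smul_eq_mul, measureReal_def] at h4
        have h5 : ((μ α) (Set.Ioi (B - c))ᶜ).toReal ≤ 1 := by
          simpa using ENNReal.toReal_mono ENNReal.one_ne_top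
            (prob_le_one (μ := μ α) (s := (Set.Ioi (B - c))ᶜ))
        nlinarith [le_trans h4 (by nlinarith : ((μ α) (Set.Ioi (B - c))ᶜ).toReal * B ≤ B)]
      linarith
    obtain ⟨L₁, hL₁⟩ := h (δ / (2 * B)) (div_pos hδ (by linarith))
    refine ⟨L₁, fun α => ?_⟩
    haveI := hprob α
    have hi : Integrable (fun x : ℝ => x) (μ α) := hint α
    have hic : Integrable (fun x : ℝ => x + c) (μ α) := hi.add (integrable_const c)
    have hm : 0 ≤ ∫ y, y ∂(μ α) := aux_mean_nonneg (hsupp α)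
    have hmc : (0:ℝ) < (∫ y, y ∂(μ α)) + c := by linarith
    have h2 := hL₁ α
    rw [aux_key (hsupp α) (hint α) hc] at h2
    have h3 : (∫ x in Set.Ioi (L₁ - c), (x + c) ∂(μ α)) / ((∫ y, y ∂(μ α)) + c)
        < δ / (2 * B) := (ENNReal.ofReal_lt_ofReal_iff (div_pos hδ (by linarith))).mp h2
    rw [div_lt_iff₀ hmc] at h3
    have h4 : ((∫ y, y ∂(μ α)) + c) * (δ / (2 * B)) ≤ 2 * B * (δ / (2 * B)) :=
      mul_le_mul_of_nonneg_right (hbound α) (le_of_lt (div_pos hδ (by linarith)))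
    have h5 : 2 * B * (δ / (2 * B)) = δ := by
      field_simp
    have h6 : ∫ x in Set.Ioi L₁, x ∂(μ α) ≤ ∫ x in Set.Ioi L₁, (x + c) ∂(μ α) :=
      integral_mono hi.restrict hic.restrict (fun x => by simp; linarith)
    have h7 : ∫ x in Set.Ioi L₁, (x + c) ∂(μ α) ≤ ∫ x in Set.Ioi (L₁ - c), (x + c) ∂(μ α) := by
      refine setIntegral_mono_set hic.integrableOn ?_
        (HasSubset.Subset.eventuallyLE (Set.Ioi_subset_Ioi (by linarith)))
      filter_upwards [ae_restrict_of_ae (aux_ae (hsupp α))] with x hx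
      dsimp; linarith
    linarith
end
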